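/- If C ≲_G C' and C' ≲_G C for finite sets C, C' of α, then the multiset images of C and C' under G are equal, i.e., Multiset.map G of the underlying multiset of C equals Multiset.map G of the underlying multiset of C'. -/
import Mathlib


/-- Class frame containment: `C ≲_G C'` iff there exists an injective map `m : C → C'`
with `G (m t) = G t` for every `t ∈ C`. -/
def FrameContain {α β : Type*} (G : α → β) (C C' : Finset α) : Prop :=
  ∃ m : {x // x ∈ C} → {x // x ∈ C'},
    Function.Injective m ∧ ∀ t : {x // x ∈ C}, G (m t).1 = G t.1

/-- Mutual class frame containment implies equal multiset images under `G`. -/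
theorem frameContain_antisymm {α β : Type*} (G : α → β) (C C' : Finset α)
    (h₁ : FrameContain G C C') (h₂ : FrameContain G C' C) :
    Multiset.map G C.val = Multiset.map G C'.val := by
  obtain ⟨m, hm, hG⟩ := h₁
  obtain ⟨m', hm', _⟩ := h₂
  have hcard : Fintype.card {x // x ∈ C} = Fintype.card {x // x ∈ C'} :=
    le_antisymm (Fintype.card_le_of_injective m hm) (Fintype.card_le_of_injective m' hm')
  have hbij : Function.Bijective m :=
    (Fintype.bijective_iff_injective_and_card m).2 ⟨hm, hcard⟩
  let e : {x // x ∈ C} ≃ {x // x ∈ C'} := Equiv.ofBijective m hbij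
  have h1 : Multiset.map G C.val
      = (Finset.univ : Finset {x // x ∈ C}).val.map (fun x => G x.1) := by
    rw [Finset.univ_eq_attach]
    simp [Finset.attach, Multiset.map_map, Function.comp]
    conv_lhs => rw [← Multiset.attach_map_val C.val]
    rw [Multiset.map_map]; rfl
  have h2 : Multiset.map G C'.val
      = (Finset.univ : Finset {x // x ∈ C'}).val.map (fun x => G x.1) := by
    rw [Finset.univ_eq_attach]
    simp [Finset.attach, Multiset.map_map, Function.comp]
    conv_lhs => rw [← Multiset.attach_map_val C'.val]
    rw [Multiset.map_map]; rfl
  rw [h1, h2, ← Finset.univ_map_equiv_to_embedding e, Finset.map_val, Multiset.map_map]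
  apply Multiset.map_congr rfl
  intro x _
  exact (hG x).symm
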